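/- Let α₁ ≠ α₂ ∈ ℂ, κ₁, κ₂ ∈ ℂ∖{0}, and let L ⊆ (ℂ∖{0})² be the image of the map z ↦ (κ₁(z−α₁), κ₂(z−α₂)) defined on ℂ∖{α₁,α₂}. Then there exist v ∈ ℝ² and a map φ : L → Γ_v such that the Euclidean norm satisfies ‖Log(q) − φ(q)‖₂ ≤ log 2 for every q ∈ L. -/

import Mathlib

noncomputable def LogMap {n : ℕ} (z : Fin n → ℂ) : Fin n → ℝ :=
  fun i => Real.log ‖z i‖

def ray {n : ℕ} (v d : Fin n → ℝ) : Set (Fin n → ℝ) :=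
  {x | ∃ t : ℝ, 0 ≤ t ∧ x = v + t • d}

noncomputable def stdTropLine (v : Fin 2 → ℝ) : Set (Fin 2 → ℝ) :=
  ray v ![-1, 0] ∪ ray v ![0, -1] ∪ ray v ![1, 1]

noncomputable def eucNorm2 (x : Fin 2 → ℝ) : ℝ :=
  Real.sqrt (x 0 ^ 2 + x 1 ^ 2)

noncomputable def psi (X Y : ℝ) : Fin 2 → ℝ :=
  if Y ≤ X then (if 0 ≤ Y then ![(X+Y)/2, (X+Y)/2] else ![0, Y])
  else (if 0 ≤ X then ![(X+Y)/2, (X+Y)/2] else ![X, 0])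

lemma psi_spec (X Y : ℝ) (h1 : 1 ≤ Real.exp X + Real.exp Y)
    (h2 : Real.exp X ≤ Real.exp Y + 1) (h3 : Real.exp Y ≤ Real.exp X + 1) :
    (∃ t : ℝ, 0 ≤ t ∧ (psi X Y = t • ![(-1:ℝ),0] ∨ psi X Y = t • ![(0:ℝ),-1] ∨
        psi X Y = t • ![(1:ℝ),1]))
    ∧ Real.sqrt ((X - psi X Y 0)^2 + (Y - psi X Y 1)^2) ≤ Real.log 2 := by
  have hlog2 : (0:ℝ) ≤ Real.log 2 := Real.log_nonneg one_le_two
  have h2exp : Real.exp (Real.log 2) = 2 := Real.exp_log two_pos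
  unfold psi
  split_ifs with hYX hY hX
  · -- diag, Y ≤ X, 0 ≤ Y
    have hY1 : (1:ℝ) ≤ Real.exp Y := by
      simpa using Real.exp_le_exp.mpr hY
    have hd : X - Y ≤ Real.log 2 := by
      have : Real.exp X ≤ Real.exp (Real.log 2 + Y) := by
        rw [Real.exp_add, h2exp]; nlinarith
      have := Real.exp_le_exp.mp this
      linarith
    refine ⟨⟨(X+Y)/2, by linarith, Or.inr (Or.inr ?_)⟩, ?_⟩
    · funext i; fin_cases i <;> simp
    · simp only [Matrix.cons_val_zero, Matrix.cons_val_one, Matrix.head_cons]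
      have hsq : (X - (X+Y)/2)^2 + (Y - (X+Y)/2)^2 ≤ (Real.log 2)^2 := by
        nlinarith [sub_nonneg.mpr hYX]
      calc Real.sqrt ((X - (X+Y)/2)^2 + (Y - (X+Y)/2)^2)
          ≤ Real.sqrt ((Real.log 2)^2) := Real.sqrt_le_sqrt hsq
        _ = Real.log 2 := Real.sqrt_sq hlog2
  · -- (0,Y), Y ≤ X, Y < 0
    have hY1 : Real.exp Y ≤ 1 := by
      simpa using Real.exp_le_exp.mpr (le_of_lt (not_le.mp hY))
    have hXY : Real.exp Y ≤ Real.exp X := Real.exp_le_exp.mpr hYX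
    have hXup : X ≤ Real.log 2 := by
      have : Real.exp X ≤ Real.exp (Real.log 2) := by rw [h2exp]; linarith
      exact Real.exp_le_exp.mp this
    have hXlo : -Real.log 2 ≤ X := by
      have : Real.exp (-X) ≤ Real.exp (Real.log 2) := by
        rw [h2exp, Real.exp_neg]
        rw [inv_le_iff_one_le_mul₀ (Real.exp_pos X)]  -- maybe wrong name
        nlinarith [Real.exp_pos X]
      linarith [Real.exp_le_exp.mp this]
    refine ⟨⟨-Y, by linarith [not_le.mp hY], Or.inr (Or.inl ?_)⟩, ?_⟩
    · funext i; fin_cases i <;> simp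
    · simp only [Matrix.cons_val_zero, Matrix.cons_val_one, Matrix.head_cons]
      have hsq : (X - 0)^2 + (Y - Y)^2 ≤ (Real.log 2)^2 := by nlinarith
      calc Real.sqrt ((X - 0)^2 + (Y - Y)^2)
          ≤ Real.sqrt ((Real.log 2)^2) := Real.sqrt_le_sqrt hsq
        _ = Real.log 2 := Real.sqrt_sq hlog2
  · -- diag, X < Y, 0 ≤ X
    have hX1 : (1:ℝ) ≤ Real.exp X := by simpa using Real.exp_le_exp.mpr hX
    have hd : Y - X ≤ Real.log 2 := by
      have : Real.exp Y ≤ Real.exp (Real.log 2 + X) := by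
        rw [Real.exp_add, h2exp]; nlinarith
      have := Real.exp_le_exp.mp this
      linarith
    have hXY : X ≤ Y := le_of_lt (not_le.mp hYX)
    refine ⟨⟨(X+Y)/2, by linarith, Or.inr (Or.inr ?_)⟩, ?_⟩
    · funext i; fin_cases i <;> simp
    · simp only [Matrix.cons_val_zero, Matrix.cons_val_one, Matrix.head_cons]
      have hsq : (X - (X+Y)/2)^2 + (Y - (X+Y)/2)^2 ≤ (Real.log 2)^2 := by
        nlinarith [sub_nonneg.mpr hXY]
      calc Real.sqrt ((X - (X+Y)/2)^2 + (Y - (X+Y)/2)^2)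
          ≤ Real.sqrt ((Real.log 2)^2) := Real.sqrt_le_sqrt hsq
        _ = Real.log 2 := Real.sqrt_sq hlog2
  · -- (X,0), X < Y, X < 0
    have hX1 : Real.exp X ≤ 1 := by
      simpa using Real.exp_le_exp.mpr (le_of_lt (not_le.mp hX))
    have hXY : Real.exp X ≤ Real.exp Y := Real.exp_le_exp.mpr (le_of_lt (not_le.mp hYX))
    have hYup : Y ≤ Real.log 2 := by
      have : Real.exp Y ≤ Real.exp (Real.log 2) := by rw [h2exp]; linarith
      exact Real.exp_le_exp.mp this
    have hYlo : -Real.log 2 ≤ Y := by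
      have : Real.exp (-Y) ≤ Real.exp (Real.log 2) := by
        rw [h2exp, Real.exp_neg]
        rw [inv_le_iff_one_le_mul₀ (Real.exp_pos Y)]
        nlinarith [Real.exp_pos Y]
      linarith [Real.exp_le_exp.mp this]
    refine ⟨⟨-X, by linarith [not_le.mp hX], Or.inl ?_⟩, ?_⟩
    · funext i; fin_cases i <;> simp
    · simp only [Matrix.cons_val_zero, Matrix.cons_val_one, Matrix.head_cons]
      have hsq : (X - X)^2 + (Y - 0)^2 ≤ (Real.log 2)^2 := by nlinarith
      calc Real.sqrt ((X - X)^2 + (Y - 0)^2)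
          ≤ Real.sqrt ((Real.log 2)^2) := Real.sqrt_le_sqrt hsq
        _ = Real.log 2 := Real.sqrt_sq hlog2

theorem stmt_16 (α₁ α₂ : ℂ) (hα : α₁ ≠ α₂) (κ₁ κ₂ : ℂ) (hκ₁ : κ₁ ≠ 0) (hκ₂ : κ₂ ≠ 0) :
    ∃ (v : Fin 2 → ℝ) (φ : (Fin 2 → ℂ) → (Fin 2 → ℝ)),
      ∀ q ∈ (fun z : ℂ => ![κ₁ * (z - α₁), κ₂ * (z - α₂)]) ''
          {z : ℂ | z ≠ α₁ ∧ z ≠ α₂},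
        φ q ∈ stdTropLine v ∧ eucNorm2 (LogMap q - φ q) ≤ Real.log 2 := by
  set v : Fin 2 → ℝ := ![Real.log (‖κ₁ * (α₂ - α₁)‖),
    Real.log (‖κ₂ * (α₂ - α₁)‖)] with hv
  refine ⟨v, fun q => fun i => v i + psi (LogMap q 0 - v 0) (LogMap q 1 - v 1) i, ?_⟩
  rintro q ⟨z, ⟨hz1, hz2⟩, rfl⟩
  dsimp only
  set X := LogMap (![κ₁ * (z - α₁), κ₂ * (z - α₂)]) 0 - v 0 with hX
  set Y := LogMap (![κ₁ * (z - α₁), κ₂ * (z - α₂)]) 1 - v 1 with hY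
  have hc : (α₂ - α₁) ≠ 0 := sub_ne_zero.mpr (Ne.symm hα)
  have hd : 0 < ‖α₂ - α₁‖ := norm_pos_iff.mpr hc
  have hr : 0 < ‖z - α₁‖ := norm_pos_iff.mpr (sub_ne_zero.mpr hz1)
  have hs : 0 < ‖z - α₂‖ := norm_pos_iff.mpr (sub_ne_zero.mpr hz2)
  have hk1 : 0 < ‖κ₁‖ := norm_pos_iff.mpr hκ₁
  have hk2 : 0 < ‖κ₂‖ := norm_pos_iff.mpr hκ₂
  have heX : Real.exp X = ‖z - α₁‖ / ‖α₂ - α₁‖ := by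
    have h0 : LogMap (![κ₁ * (z - α₁), κ₂ * (z - α₂)]) 0
        = Real.log (‖κ₁‖ * ‖z - α₁‖) := by
      simp [LogMap, map_mul]
    have hv0 : v 0 = Real.log (‖κ₁‖ * ‖α₂ - α₁‖) := by
      simp [hv, map_mul]
    rw [hX, h0, hv0, Real.exp_sub, Real.exp_log (by positivity),
      Real.exp_log (by positivity), mul_div_mul_left _ _ (ne_of_gt hk1)]
  have heY : Real.exp Y = ‖z - α₂‖ / ‖α₂ - α₁‖ := by
    have h0 : LogMap (![κ₁ * (z - α₁), κ₂ * (z - α₂)]) 1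
        = Real.log (‖κ₂‖ * ‖z - α₂‖) := by
      simp [LogMap, map_mul]
    have hv1 : v 1 = Real.log (‖κ₂‖ * ‖α₂ - α₁‖) := by
      simp [hv, map_mul]
    rw [hY, h0, hv1, Real.exp_sub, Real.exp_log (by positivity),
      Real.exp_log (by positivity), mul_div_mul_left _ _ (ne_of_gt hk2)]
  -- triangle inequalities
  have t1 : ‖α₂ - α₁‖ ≤ ‖z - α₁‖ + ‖z - α₂‖ := by
    calc ‖α₂ - α₁‖ = ‖(α₂ - z) + (z - α₁)‖ := by congr 1; ring
      _ ≤ ‖α₂ - z‖ + ‖z - α₁‖ := norm_add_le _ _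
      _ = ‖z - α₁‖ + ‖z - α₂‖ := by
          rw [norm_sub_rev α₂ z]; ring
  have t2 : ‖z - α₁‖ ≤ ‖z - α₂‖ + ‖α₂ - α₁‖ := by
    calc ‖z - α₁‖ = ‖(z - α₂) + (α₂ - α₁)‖ := by congr 1; ring
      _ ≤ _ := norm_add_le _ _
  have t3 : ‖z - α₂‖ ≤ ‖z - α₁‖ + ‖α₂ - α₁‖ := by
    calc ‖z - α₂‖ = ‖(z - α₁) + (α₁ - α₂)‖ := by congr 1; ring
      _ ≤ ‖z - α₁‖ + ‖α₁ - α₂‖ := norm_add_le _ _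
      _ = ‖z - α₁‖ + ‖α₂ - α₁‖ := by
          rw [norm_sub_rev α₁ α₂]
  have h1 : 1 ≤ Real.exp X + Real.exp Y := by
    rw [heX, heY, ← add_div, le_div_iff₀ hd]; linarith
  have h2 : Real.exp X ≤ Real.exp Y + 1 := by
    rw [heX, heY, div_add' _ _ _ (ne_of_gt hd), div_le_div_iff₀ hd hd]
    nlinarith
  have h3 : Real.exp Y ≤ Real.exp X + 1 := by
    rw [heX, heY, div_add' _ _ _ (ne_of_gt hd), div_le_div_iff₀ hd hd]
    nlinarith
  obtain ⟨⟨t, ht, hcase⟩, hbound⟩ := psi_spec X Y h1 h2 h3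
  constructor
  · rcases hcase with h | h | h
    · exact Or.inl (Or.inl ⟨t, ht, by funext i; fin_cases i <;> simp [h]⟩)
    · exact Or.inl (Or.inr ⟨t, ht, by funext i; fin_cases i <;> simp [h]⟩)
    · exact Or.inr ⟨t, ht, by funext i; fin_cases i <;> simp [h]⟩
  · have e0 : (LogMap (![κ₁ * (z - α₁), κ₂ * (z - α₂)])
        - fun i => v i + psi X Y i) 0 = X - psi X Y 0 := by
      simp [Pi.sub_apply, hX]; ring
    have e1 : (LogMap (![κ₁ * (z - α₁), κ₂ * (z - α₂)])
        - fun i => v i + psi X Y i) 1 = Y - psi X Y 1 := by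
      simp [Pi.sub_apply, hY]; ring
    rw [eucNorm2, e0, e1]
    exact hbound
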